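/- Let l ∈ [−1,0], let P = diag(p_1,…,p_m) be a positive diagonal matrix, let K_d = diag(k_{11},…,k_{mm}) be a positive diagonal matrix, and let Υ satisfy the interval bounds with boundary matrix B. Define H_d = ((1+l)/(2+l))·P B K_d + (1/(2+l))·K_d Bᵀ P. Then for every x ∈ ℝ^m: ⌈x⌋^{1+l,T} P Υ K_d x ≥ Σ_{i=1}^m Σ_{j=1}^m |x_i|^{2+l} (H_d)_{ij}. -/
import Mathlib


open Matrix BigOperators Finset

/-- Signed power: ⌈x⌋^d = |x|^d · sign x. -/
noncomputable def spow (x d : ℝ) : ℝ := |x| ^ d * Real.sign x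

/-- Υ satisfies the interval bounds. -/
def SatisfiesBounds {m : ℕ} (lo : Fin m → ℝ) (hi : Fin m → Fin m → ℝ)
    (Υ : Matrix (Fin m) (Fin m) ℝ) : Prop :=
  (∀ i, lo i ≤ Υ i i) ∧ ∀ i j, |Υ i j| ≤ hi i j

/-- The boundary matrix of the interval bounds. -/
def boundaryMatrix {m : ℕ} (lo : Fin m → ℝ) (hi : Fin m → Fin m → ℝ) :
    Matrix (Fin m) (Fin m) ℝ :=
  Matrix.of fun i j => if i = j then lo i else -hi i j

lemma abs_spow_le (u d : ℝ) : |spow u d| ≤ |u| ^ d := by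
  rw [spow, abs_mul, abs_of_nonneg (Real.rpow_nonneg (abs_nonneg u) d)]
  have hsgn : |Real.sign u| ≤ 1 := by
    rcases lt_trichotomy u 0 with h|h|h
    · simp [Real.sign_of_neg h]
    · simp [h]
    · simp [Real.sign_of_pos h]
  calc |u| ^ d * |Real.sign u| ≤ |u| ^ d * 1 :=
        mul_le_mul_of_nonneg_left hsgn (Real.rpow_nonneg (abs_nonneg u) d)
    _ = |u| ^ d := mul_one _

lemma spow_mul_self (u l : ℝ) (hl : -1 ≤ l) : spow u (1 + l) * u = |u| ^ (2 + l) := by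
  rcases eq_or_ne u 0 with h|h
  · simp [h, spow, Real.zero_rpow (by linarith : (2:ℝ) + l ≠ 0)]
  · have hs : Real.sign u * u = |u| := by
      rcases lt_or_gt_of_ne h with h'|h'
      · rw [Real.sign_of_neg h', abs_of_neg h']; ring
      · rw [Real.sign_of_pos h', abs_of_pos h']; ring
    rw [spow, mul_assoc, hs, ← Real.rpow_add_one (abs_ne_zero.2 h)]
    congr 1; ring

theorem stmt3 {m : ℕ} (hm : 1 ≤ m) (l : ℝ) (hl : l ∈ Set.Icc (-1 : ℝ) 0)
    (lo : Fin m → ℝ) (hi : Fin m → Fin m → ℝ)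
    (hlo : ∀ i, 0 < lo i) (hhi : ∀ i j, 0 ≤ hi i j) (hdiag : ∀ i, lo i ≤ hi i i)
    (p k : Fin m → ℝ) (hp : ∀ i, 0 < p i) (hk : ∀ i, 0 < k i)
    (Υ : Matrix (Fin m) (Fin m) ℝ) (hΥ : SatisfiesBounds lo hi Υ)
    (Hd : Matrix (Fin m) (Fin m) ℝ)
    (hHd : Hd = ((1 + l) / (2 + l)) •
          (Matrix.diagonal p * boundaryMatrix lo hi * Matrix.diagonal k) +
        (1 / (2 + l)) •
          (Matrix.diagonal k * (boundaryMatrix lo hi)ᵀ * Matrix.diagonal p)) :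
    ∀ x : Fin m → ℝ,
      ∑ i, ∑ j, |x i| ^ (2 + l) * Hd i j ≤
        ∑ i, ∑ j,
          spow (x i) (1 + l) * ((Matrix.diagonal p * Υ * Matrix.diagonal k) i j) * x j := by
  intro x
  obtain ⟨hΥd, hΥb⟩ := hΥ
  have h1l : (0:ℝ) ≤ 1 + l := by linarith [hl.1]
  have h2l : (0:ℝ) < 2 + l := by linarith [hl.1]
  have ne2 : (2:ℝ) + l ≠ 0 := h2l.ne'
  set a : ℝ := (1 + l) / (2 + l) with hadef
  set b : ℝ := 1 / (2 + l) with hbdef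
  have ha : 0 ≤ a := div_nonneg h1l h2l.le
  have hb : 0 ≤ b := by positivity
  have hab : a + b = 1 := by rw [hadef, hbdef]; field_simp; ring
  set B := boundaryMatrix lo hi with hBdef
  have hHde : ∀ i j, Hd i j = a * (p i * B i j * k j) + b * (k i * B j i * p j) := by
    intro i j
    rw [hHd]
    simp [Matrix.add_apply, Matrix.smul_apply, Matrix.mul_diagonal, Matrix.diagonal_mul,
      Matrix.transpose_apply, smul_eq_mul]
  have hPe : ∀ i j, (Matrix.diagonal p * Υ * Matrix.diagonal k) i j = p i * Υ i j * k j := by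
    intro i j
    simp [Matrix.mul_diagonal, Matrix.diagonal_mul]
  calc ∑ i, ∑ j, |x i| ^ (2 + l) * Hd i j
      = ∑ i, ∑ j, (|x i| ^ (2 + l) * (a * (p i * B i j * k j))
          + |x i| ^ (2 + l) * (b * (k i * B j i * p j))) := by
        refine Finset.sum_congr rfl fun i _ => Finset.sum_congr rfl fun j _ => ?_
        rw [hHde]; ring
    _ = (∑ i, ∑ j, |x i| ^ (2 + l) * (a * (p i * B i j * k j)))
          + ∑ i, ∑ j, |x i| ^ (2 + l) * (b * (k i * B j i * p j)) := by
        simp [Finset.sum_add_distrib]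
    _ = ∑ i, ∑ j, (a * |x i| ^ (2 + l) + b * |x j| ^ (2 + l)) * (p i * B i j * k j) := by
        rw [Finset.sum_comm (f := fun i j => |x i| ^ (2 + l) * (b * (k i * B j i * p j))),
          ← Finset.sum_add_distrib]
        refine Finset.sum_congr rfl fun i _ => ?_
        rw [← Finset.sum_add_distrib]
        refine Finset.sum_congr rfl fun j _ => ?_
        ring
    _ ≤ ∑ i, ∑ j,
          spow (x i) (1 + l) * ((Matrix.diagonal p * Υ * Matrix.diagonal k) i j) * x j := by
        refine Finset.sum_le_sum fun i _ => Finset.sum_le_sum fun j _ => ?_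
        rw [hPe]
        have hx : (0:ℝ) ≤ |x i| ^ (2 + l) := Real.rpow_nonneg (abs_nonneg _) _
        have hy : (0:ℝ) ≤ |x j| ^ (2 + l) := Real.rpow_nonneg (abs_nonneg _) _
        by_cases hij : i = j
        · subst hij
          have hBe : B i i = lo i := by simp [hBdef, boundaryMatrix]
          have h1 : a * |x i| ^ (2 + l) + b * |x i| ^ (2 + l) = |x i| ^ (2 + l) := by
            rw [← add_mul, hab, one_mul]
          rw [hBe, h1]
          have h2 := spow_mul_self (x i) l hl.1
          calc |x i| ^ (2 + l) * (p i * lo i * k i)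
              ≤ |x i| ^ (2 + l) * (p i * Υ i i * k i) := by
                refine mul_le_mul_of_nonneg_left ?_ hx
                exact mul_le_mul_of_nonneg_right
                  (mul_le_mul_of_nonneg_left (hΥd i) (hp i).le) (hk i).le
            _ = spow (x i) (1 + l) * (p i * Υ i i * k i) * x i := by rw [← h2]; ring
        · have hBe : B i j = -hi i j := by simp [hBdef, boundaryMatrix, hij]
          rw [hBe]
          have young : |x i| ^ (1 + l) * |x j| ≤ a * |x i| ^ (2 + l) + b * |x j| ^ (2 + l) := by
            have e1 : |x i| ^ (1 + l) = (|x i| ^ (2 + l)) ^ a := by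
              rw [← Real.rpow_mul (abs_nonneg _)]
              congr 1
              rw [hadef]; field_simp
            have e2 : |x j| = (|x j| ^ (2 + l)) ^ b := by
              rw [← Real.rpow_mul (abs_nonneg _),
                show (2 + l) * b = 1 by rw [hbdef]; field_simp, Real.rpow_one]
            calc |x i| ^ (1 + l) * |x j| = (|x i| ^ (2 + l)) ^ a * (|x j| ^ (2 + l)) ^ b := by
                  rw [e1]; conv_lhs => rw [e2]
              _ ≤ a * |x i| ^ (2 + l) + b * |x j| ^ (2 + l) :=
                  Real.geom_mean_le_arith_mean2_weighted ha hb hx hy hab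
          have habs : |spow (x i) (1 + l) * Υ i j * x j| ≤ |x i| ^ (1 + l) * |x j| * hi i j := by
            rw [abs_mul, abs_mul]
            have h1 := abs_spow_le (x i) (1 + l)
            have h2 := hΥb i j
            calc |spow (x i) (1 + l)| * |Υ i j| * |x j|
                ≤ (|x i| ^ (1 + l) * hi i j) * |x j| :=
                  mul_le_mul_of_nonneg_right
                    (mul_le_mul h1 h2 (abs_nonneg _) (Real.rpow_nonneg (abs_nonneg _) _))
                    (abs_nonneg _)
              _ = |x i| ^ (1 + l) * |x j| * hi i j := by ring
          have step : -((a * |x i| ^ (2 + l) + b * |x j| ^ (2 + l)) * hi i j)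
              ≤ spow (x i) (1 + l) * Υ i j * x j := by
            have t1 : |x i| ^ (1 + l) * |x j| * hi i j
                ≤ (a * |x i| ^ (2 + l) + b * |x j| ^ (2 + l)) * hi i j :=
              mul_le_mul_of_nonneg_right young (hhi i j)
            have t2 := neg_abs_le (spow (x i) (1 + l) * Υ i j * x j)
            linarith
          have hpk : (0:ℝ) < p i * k j := mul_pos (hp i) (hk j)
          calc (a * |x i| ^ (2 + l) + b * |x j| ^ (2 + l)) * (p i * -hi i j * k j)
              = (-((a * |x i| ^ (2 + l) + b * |x j| ^ (2 + l)) * hi i j)) * (p i * k j) := by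
                ring
            _ ≤ (spow (x i) (1 + l) * Υ i j * x j) * (p i * k j) :=
                mul_le_mul_of_nonneg_right step hpk.le
            _ = spow (x i) (1 + l) * (p i * Υ i j * k j) * x j := by ring
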